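/- Let $X_n$ be a random walk on $\mathbb{Z}^2$ with i.i.d. increments. Suppose its transition probabilities satisfy $p(n,0,x)\le C/n$ for all $n\ge1,x$, and $|p(n,0,x)-p(n,0,y)|\le C|x-y|/n^{3/2}$ for all $n\ge1$ and $x,y\in\mathbb{Z}^2$. Then the potential kernel $G(x)=\sum_{n=1}^\infty[p(n,0,x)-p(n,0,e_1)]$ converges absolutely for every $x$, and $|G(x)|\le c(1+\log^+|x|)$ for some constant $c$. -/

import Mathlib

open MeasureTheory ProbabilityTheory

/-- Euclidean norm of a point of `ℤ × ℤ`. -/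
noncomputable def znorm (x : ℤ × ℤ) : ℝ := Real.sqrt ((x.1 : ℝ) ^ 2 + (x.2 : ℝ) ^ 2)

lemma znorm_nonneg (x : ℤ × ℤ) : 0 ≤ znorm x := Real.sqrt_nonneg _

lemma znorm_sub_one (x : ℤ × ℤ) : znorm (x - (1, 0)) ≤ znorm x + 1 := by
  unfold znorm
  have h1 : ((x - (1, 0)).1 : ℝ) = (x.1 : ℝ) - 1 := by
    simp [Prod.fst_sub]
  have h2 : ((x - (1, 0)).2 : ℝ) = (x.2 : ℝ) := by
    simp [Prod.snd_sub]
  rw [h1, h2]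
  set a := (x.1 : ℝ)
  set b := (x.2 : ℝ)
  set s := Real.sqrt (a ^ 2 + b ^ 2) with hs
  have hs0 : 0 ≤ s := Real.sqrt_nonneg _
  have hs2 : s ^ 2 = a ^ 2 + b ^ 2 := Real.sq_sqrt (by positivity)
  have ha : -a ≤ s := by nlinarith [sq_nonneg b, sq_nonneg (s + a), sq_nonneg (s - a)]
  calc Real.sqrt ((a - 1) ^ 2 + b ^ 2) ≤ Real.sqrt ((s + 1) ^ 2) :=
        Real.sqrt_le_sqrt (by nlinarith)
    _ = s + 1 := Real.sqrt_sq (by linarith)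

lemma key_ineq (a : ℝ) (ha : 1 ≤ a) :
    1 / (a + 1) ^ (3 / 2 : ℝ) ≤ 2 * (1 / Real.sqrt a - 1 / Real.sqrt (a + 1)) := by
  have ha0 : (0 : ℝ) < a := by linarith
  have hb0 : (0 : ℝ) < a + 1 := by linarith
  have hrw : (a + 1) ^ (3 / 2 : ℝ) = (a + 1) * Real.sqrt (a + 1) := by
    rw [Real.sqrt_eq_rpow, show (3 / 2 : ℝ) = 1 + 1 / 2 by norm_num, Real.rpow_add hb0,
      Real.rpow_one]
  set sa := Real.sqrt a with hsadef
  set sb := Real.sqrt (a + 1) with hsbdef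
  have hsa : 0 < sa := Real.sqrt_pos.mpr ha0
  have hsb : 0 < sb := Real.sqrt_pos.mpr hb0
  have hsa2 : sa ^ 2 = a := Real.sq_sqrt ha0.le
  have hsb2 : sb ^ 2 = (a + 1) := Real.sq_sqrt hb0.le
  have hle : sa ≤ sb := Real.sqrt_le_sqrt (by linarith)
  rw [hrw, ← hsb2]
  have h1 : 1 / sa - 1 / sb = (sb - sa) / (sa * sb) := by
    field_simp
  rw [h1, mul_div_assoc']
  rw [div_le_div_iff₀ (by positivity) (by positivity)]
  have hkey : (sb - sa) * (sb + sa) = 1 := by nlinarith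
  have h2 : sa * sb * (sb + sa) ≤ 2 * (sb ^ 2 * sb) := by nlinarith
  have h4 : 2 * (sb - sa) * (sb ^ 2 * sb) * (sb + sa) = 2 * (sb ^ 2 * sb) := by
    calc 2 * (sb - sa) * (sb ^ 2 * sb) * (sb + sa)
        = 2 * (sb ^ 2 * sb) * ((sb - sa) * (sb + sa)) := by ring
      _ = 2 * (sb ^ 2 * sb) := by rw [hkey, mul_one]
  have h5 : (1 * (sa * sb)) * (sb + sa) ≤ (2 * (sb - sa) * (sb ^ 2 * sb)) * (sb + sa) := by
    rw [h4]; nlinarith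
  exact le_of_mul_le_mul_right h5 (by positivity)

set_option maxHeartbeats 1000000 in
theorem stmt8 {Ω : Type*} [MeasurableSpace Ω] (μ : Measure Ω) [IsProbabilityMeasure μ]
    (ξ : ℕ → Ω → ℤ × ℤ) (hmeas : ∀ i, Measurable (ξ i))
    (hindep : iIndepFun ξ μ)
    (hident : ∀ i, Measure.map (ξ i) μ = Measure.map (ξ 0) μ)
    (X : ℕ → Ω → ℤ × ℤ) (hX : ∀ n ω, X n ω = ∑ i ∈ Finset.range n, ξ i ω)
    (p : ℕ → ℤ × ℤ → ℝ) (hp : ∀ n x, p n x = (μ {ω | X n ω = x}).toReal)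
    (C : ℝ)
    (hbound : ∀ n : ℕ, 1 ≤ n → ∀ x, p n x ≤ C / n)
    (hdiff : ∀ n : ℕ, 1 ≤ n → ∀ x y : ℤ × ℤ,
      |p n x - p n y| ≤ C * znorm (x - y) / (n : ℝ) ^ (3 / 2 : ℝ)) :
    (∀ x, Summable fun n : ℕ => |p (n + 1) x - p (n + 1) (1, 0)|) ∧
      ∃ c : ℝ, ∀ x,
        |∑' n : ℕ, (p (n + 1) x - p (n + 1) (1, 0))| ≤
          c * (1 + max (Real.log (znorm x)) 0) := by
  -- basic facts
  have hpnn : ∀ n x, 0 ≤ p n x := fun n x => by rw [hp]; exact ENNReal.toReal_nonneg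
  have hC : 0 ≤ C := by
    have h := hbound 1 le_rfl 0
    have h0 := hpnn 1 0
    simp at h
    linarith
  -- pointwise bound from hdiff
  have key_bound : ∀ (x : ℤ × ℤ) (n : ℕ),
      |p (n + 1) x - p (n + 1) (1, 0)| ≤
        C * znorm (x - (1, 0)) * (1 / ((n : ℝ) + 1) ^ (3 / 2 : ℝ)) := by
    intro x n
    have h := hdiff (n + 1) (by omega) x (1, 0)
    have hc : ((n + 1 : ℕ) : ℝ) = (n : ℝ) + 1 := by push_cast; ring
    rw [hc] at h
    rw [mul_one_div]
    exact h
  have hsummable_aux : Summable (fun n : ℕ => 1 / ((n : ℝ) + 1) ^ (3 / 2 : ℝ)) := by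
    have h := Real.summable_one_div_nat_rpow.mpr (show (1 : ℝ) < 3 / 2 by norm_num)
    have h2 := (summable_nat_add_iff 1).mpr h
    refine h2.congr fun n => ?_
    push_cast
    ring_nf
  have hSum : ∀ x, Summable fun n : ℕ => |p (n + 1) x - p (n + 1) (1, 0)| := fun x =>
    Summable.of_nonneg_of_le (fun n => abs_nonneg _) (key_bound x)
      (hsummable_aux.mul_left _)
  refine ⟨hSum, 10 * (C + 1), fun x => ?_⟩
  set R := znorm x with hRdef
  have hR0 : 0 ≤ R := znorm_nonneg x
  set r := znorm (x - (1, 0)) with hrdef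
  have hr0 : 0 ≤ r := znorm_nonneg _
  have hrR : r ≤ R + 1 := znorm_sub_one x
  set L := max (Real.log R) 0 with hLdef
  have hL0 : 0 ≤ L := le_max_right _ _
  have hLlog : Real.log R ≤ L := le_max_left _ _
  set N := max (⌈R ^ 2⌉₊) 1 with hNdef
  have hN1 : 1 ≤ N := le_max_right _ _
  have hN1R : (1 : ℝ) ≤ (N : ℝ) := by exact_mod_cast hN1
  have hNR : R ^ 2 ≤ (N : ℝ) := by
    refine le_trans (Nat.le_ceil _) ?_
    exact Nat.cast_le.mpr (le_max_left _ _)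
  have hNle : (N : ℝ) ≤ R ^ 2 + 1 := by
    rw [hNdef, Nat.cast_max]
    apply max_le
    · exact (Nat.ceil_lt_add_one (by positivity)).le
    · norm_num; positivity
  have hsqrtN : R ≤ Real.sqrt N := by
    rw [show R = Real.sqrt (R ^ 2) from (Real.sqrt_sq hR0).symm]
    exact Real.sqrt_le_sqrt hNR
  have hsqrtN1 : 1 ≤ Real.sqrt N := Real.one_le_sqrt.mpr hN1R
  have hsN0 : 0 < Real.sqrt N := lt_of_lt_of_le one_pos hsqrtN1
  -- abs of tsum
  have habs : |∑' n : ℕ, (p (n + 1) x - p (n + 1) (1, 0))| ≤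
      ∑' n : ℕ, |p (n + 1) x - p (n + 1) (1, 0)| := by
    have := norm_tsum_le_tsum_norm (f := fun n : ℕ => p (n + 1) x - p (n + 1) (1, 0))
      (by simpa [Real.norm_eq_abs] using hSum x)
    simpa [Real.norm_eq_abs] using this
  have hsplit : (∑' n : ℕ, |p (n + 1) x - p (n + 1) (1, 0)|) =
      (∑ n ∈ Finset.range N, |p (n + 1) x - p (n + 1) (1, 0)|) +
        ∑' n : ℕ, |p (n + N + 1) x - p (n + N + 1) (1, 0)| := by
    exact (Summable.sum_add_tsum_nat_add N (hSum x)).symm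
  -- head estimate
  have hhead : (∑ n ∈ Finset.range N, |p (n + 1) x - p (n + 1) (1, 0)|) ≤
      2 * C * (1 + Real.log N) := by
    have hterm : ∀ n ∈ Finset.range N,
        |p (n + 1) x - p (n + 1) (1, 0)| ≤ 2 * C * ((n : ℝ) + 1)⁻¹ := by
      intro n _
      have h1 := hbound (n + 1) (by omega) x
      have h2 := hbound (n + 1) (by omega) (1, 0)
      have hc : ((n + 1 : ℕ) : ℝ) = (n : ℝ) + 1 := by push_cast; ring
      rw [hc] at h1 h2
      have hn0 : (0 : ℝ) < (n : ℝ) + 1 := by positivity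
      have hCn : 0 ≤ C / ((n : ℝ) + 1) := by positivity
      have e : 2 * C * ((n : ℝ) + 1)⁻¹ = 2 * (C / ((n : ℝ) + 1)) := by
        field_simp
      rw [e]
      rw [abs_le]
      constructor
      · have := hpnn (n + 1) x; linarith
      · have := hpnn (n + 1) (1, 0); linarith
    calc (∑ n ∈ Finset.range N, |p (n + 1) x - p (n + 1) (1, 0)|)
        ≤ ∑ n ∈ Finset.range N, 2 * C * ((n : ℝ) + 1)⁻¹ := Finset.sum_le_sum hterm
      _ = 2 * C * ∑ n ∈ Finset.range N, ((n : ℝ) + 1)⁻¹ := by rw [Finset.mul_sum]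
      _ = 2 * C * (harmonic N : ℝ) := by
          congr 1
          rw [harmonic]
          push_cast
          ring
      _ ≤ 2 * C * (1 + Real.log N) := by
          have := harmonic_le_one_add_log N
          have h2C : 0 ≤ 2 * C := by linarith
          nlinarith
  -- tail estimate
  set g : ℕ → ℝ := fun i => 1 / Real.sqrt ((i : ℝ) + N) with hgdef
  have hgpos : ∀ i : ℕ, 0 < Real.sqrt ((i : ℝ) + N) := by
    intro i
    apply Real.sqrt_pos.mpr
    have : (0 : ℝ) ≤ (i : ℝ) := Nat.cast_nonneg i
    linarith
  have hganti : ∀ i : ℕ, g (i + 1) ≤ g i := by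
    intro i
    apply one_div_le_one_div_of_le (hgpos i)
    apply Real.sqrt_le_sqrt
    push_cast
    linarith
  have hgnn : ∀ i : ℕ, 0 ≤ g i := fun i => by positivity
  have hgpt : ∀ n : ℕ, |p (n + N + 1) x - p (n + N + 1) (1, 0)| ≤
      2 * (C * r) * (g n - g (n + 1)) := by
    intro n
    have h1 := key_bound x (n + N)
    have h2 := key_ineq ((n : ℝ) + N) (by linarith [Nat.cast_nonneg (α := ℝ) n])
    have hcast : ((n + N : ℕ) : ℝ) = (n : ℝ) + N := by push_cast; ring
    rw [hcast] at h1
    have hg1 : g n = 1 / Real.sqrt ((n : ℝ) + N) := rfl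
    have hg2 : g (n + 1) = 1 / Real.sqrt ((n : ℝ) + N + 1) := by
      have hc2 : ((n + 1 : ℕ) : ℝ) + (N : ℝ) = (n : ℝ) + N + 1 := by push_cast; ring
      simp only [hgdef, hc2]
    calc |p (n + N + 1) x - p (n + N + 1) (1, 0)|
        ≤ C * r * (1 / ((n : ℝ) + N + 1) ^ (3 / 2 : ℝ)) := h1
      _ ≤ C * r * (2 * (1 / Real.sqrt ((n : ℝ) + N) - 1 / Real.sqrt ((n : ℝ) + N + 1))) := by
          apply mul_le_mul_of_nonneg_left _ (mul_nonneg hC hr0)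
          exact h2
      _ = 2 * (C * r) * (g n - g (n + 1)) := by rw [hg1, hg2]; ring
  have hfn : ∀ n : ℕ, 0 ≤ 2 * (C * r) * (g n - g (n + 1)) := by
    intro n
    apply mul_nonneg
    · positivity
    · linarith [hganti n]
  have hfs : ∀ m : ℕ, ∑ i ∈ Finset.range m, 2 * (C * r) * (g i - g (i + 1)) ≤
      2 * (C * r) * (1 / Real.sqrt N) := by
    intro m
    rw [← Finset.mul_sum, Finset.sum_range_sub' g]
    have hg0 : g 0 = 1 / Real.sqrt N := by simp [hgdef]
    rw [← hg0]
    apply mul_le_mul_of_nonneg_left _ (by positivity)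
    linarith [hgnn m]
  have htail : (∑' n : ℕ, |p (n + N + 1) x - p (n + N + 1) (1, 0)|) ≤
      2 * (C * r) * (1 / Real.sqrt N) := by
    refine le_trans (Summable.tsum_le_tsum hgpt ?_ (summable_of_sum_range_le hfn hfs)) ?_
    · exact (summable_nat_add_iff N).mpr (hSum x)
    · exact Real.tsum_le_of_sum_range_le hfn hfs
  have htail4 : 2 * (C * r) * (1 / Real.sqrt N) ≤ 4 * C := by
    have h1 : r * (1 / Real.sqrt N) ≤ 2 := by
      rw [mul_one_div, div_le_iff₀ hsN0]
      linarith
    calc 2 * (C * r) * (1 / Real.sqrt N) = 2 * C * (r * (1 / Real.sqrt N)) := by ring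
      _ ≤ 2 * C * 2 := by apply mul_le_mul_of_nonneg_left h1 (by linarith)
      _ = 4 * C := by ring
  -- log estimate
  have hlog : Real.log N ≤ 1 + 2 * L := by
    have hlog2 : Real.log 2 < 1 := by
      have := Real.log_two_lt_d9
      linarith
    have h1 : Real.log N ≤ Real.log (R ^ 2 + 1) :=
      Real.log_le_log (by positivity) hNle
    have h2 : Real.log (R ^ 2 + 1) ≤ Real.log 2 + 2 * L := by
      rcases le_or_gt 1 R with h | h
      · have hR1 : (0 : ℝ) < R := by linarith
        have ha : R ^ 2 + 1 ≤ 2 * R ^ 2 := by nlinarith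
        calc Real.log (R ^ 2 + 1) ≤ Real.log (2 * R ^ 2) :=
              Real.log_le_log (by positivity) ha
          _ = Real.log 2 + 2 * Real.log R := by
              rw [Real.log_mul (by norm_num) (by positivity), Real.log_pow]
              push_cast
              ring
          _ ≤ Real.log 2 + 2 * L := by linarith
      · have ha : R ^ 2 + 1 ≤ 2 := by nlinarith
        calc Real.log (R ^ 2 + 1) ≤ Real.log 2 := Real.log_le_log (by positivity) ha
          _ ≤ Real.log 2 + 2 * L := by linarith
    linarith
  -- combine
  calc |∑' n : ℕ, (p (n + 1) x - p (n + 1) (1, 0))|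
      ≤ ∑' n : ℕ, |p (n + 1) x - p (n + 1) (1, 0)| := habs
    _ = (∑ n ∈ Finset.range N, |p (n + 1) x - p (n + 1) (1, 0)|) +
        ∑' n : ℕ, |p (n + N + 1) x - p (n + N + 1) (1, 0)| := hsplit
    _ ≤ 2 * C * (1 + Real.log N) + 4 * C := by
        have := le_trans htail htail4
        linarith
    _ ≤ 10 * (C + 1) * (1 + L) := by nlinarith [mul_nonneg hC hL0]
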